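/- Let c ≥ 3 be an integer and let LO_c ⊆ (Fin c)³ be the ternary relation consisting of all triples (a₁, a₂, a₃) in which the maximum of the three entries is attained by exactly one coordinate. Then LO_c is reconfigurable: its reconfiguration graph is connected. -/

import Mathlib

/-- The reconfiguration graph of a relation `R ⊆ A^r`: vertices are the tuples of `R`,
two tuples being adjacent iff they differ in exactly one coordinate. -/
def reconfGraph {A : Type*} {r : ℕ} (R : Set (Fin r → A)) : SimpleGraph R where
  Adj x y := ∃! i : Fin r, x.1 i ≠ y.1 i
  symm := by
    constructor
    rintro x y ⟨i, hi, hu⟩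
    exact ⟨i, Ne.symm hi, fun j hj => hu j (Ne.symm hj)⟩
  loopless := by
    constructor
    rintro x ⟨i, hi, -⟩
    exact hi rfl

namespace LOaux

/-- One step in the reconfiguration graph (or staying put): update one coordinate. -/
lemma reach_update {A : Type*} {r : ℕ} {R : Set (Fin r → A)} (x : R) (i : Fin r) (v : A)
    (h : Function.update x.1 i v ∈ R) :
    (reconfGraph R).Reachable x ⟨Function.update x.1 i v, h⟩ := by
  by_cases hv : v = x.1 i
  · have hx : (⟨Function.update x.1 i v, h⟩ : R) = x := by
      apply Subtype.ext
      subst hv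
      exact Function.update_eq_self i x.1
    rw [hx]
  · apply SimpleGraph.Adj.reachable
    refine ⟨i, ?_, ?_⟩
    · simpa using fun h' => hv h'.symm
    · intro j hj
      by_contra hji
      exact hj (show x.1 j = Function.update x.1 i v j by
        rw [Function.update_of_ne hji])

variable {c : ℕ}

def LOrel (c : ℕ) : Set (Fin 3 → Fin c) := {x | ∃! i : Fin 3, ∀ j : Fin 3, x j ≤ x i}

lemma mem_of_lt {x : Fin 3 → Fin c} {i j k : Fin 3} (hcov : ∀ l : Fin 3, l = i ∨ l = j ∨ l = k)
    (hj : x j < x i) (hk : x k < x i) : x ∈ LOrel c := by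
  refine ⟨i, ?_, ?_⟩
  · intro l
    rcases hcov l with h | h | h <;> subst h
    · exact le_refl _
    · exact le_of_lt hj
    · exact le_of_lt hk
  · intro m hm
    rcases hcov m with h | h | h
    · exact h
    · exact absurd (hm i) (by subst h; exact not_le_of_gt hj)
    · exact absurd (hm i) (by subst h; exact not_le_of_gt hk)

lemma strict_max {x : Fin 3 → Fin c} (h : x ∈ LOrel c) {i : Fin 3}
    (hi : ∀ j : Fin 3, x j ≤ x i) {m : Fin 3} (hm : m ≠ i) : x m < x i := by
  obtain ⟨i', hi', hu⟩ := h
  have hii : i = i' := hu i hi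
  subst hii
  rcases lt_or_eq_of_le (hi m) with h' | h'
  · exact h'
  · exact absurd (hu m (fun l => h' ▸ hi l)) hm

def z0 (hc : 3 ≤ c) : Fin c := ⟨0, by omega⟩
def z1 (hc : 3 ≤ c) : Fin c := ⟨1, by omega⟩
def z2 (hc : 3 ≤ c) : Fin c := ⟨2, by omega⟩

lemma z0_le (hc : 3 ≤ c) (a : Fin c) : z0 hc ≤ a := by
  simp [z0, Fin.le_def]

lemma z0_lt_z1 (hc : 3 ≤ c) : z0 hc < z1 hc := by simp [z0, z1, Fin.lt_def]
lemma z0_lt_z2 (hc : 3 ≤ c) : z0 hc < z2 hc := by simp [z0, z2, Fin.lt_def]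
lemma z1_lt_z2 (hc : 3 ≤ c) : z1 hc < z2 hc := by simp [z1, z2, Fin.lt_def]

/-- The tuple with `1` in coordinate `i` and `0` elsewhere. -/
def onehot (hc : 3 ≤ c) (i : Fin 3) : Fin 3 → Fin c :=
  Function.update (fun _ => z0 hc) i (z1 hc)

lemma onehot_mem (hc : 3 ≤ c) (i : Fin 3) : onehot hc i ∈ LOrel c := by
  have hcov : ∀ l : Fin 3, l = i ∨ l = i ∨ l = i ∨ True := fun l => by tauto
  -- choose j k distinct from i covering
  fin_cases i
  · refine mem_of_lt (i := 0) (j := 1) (k := 2) (by decide) ?_ ?_ <;>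
      simp [onehot, Function.update, z0_lt_z1]
  · refine mem_of_lt (i := 1) (j := 0) (k := 2) (by decide) ?_ ?_ <;>
      simp [onehot, Function.update, z0_lt_z1]
  · refine mem_of_lt (i := 2) (j := 0) (k := 1) (by decide) ?_ ?_ <;>
      simp [onehot, Function.update, z0_lt_z1]

/-- Any member of `LOrel` whose unique maximum is at `i` reaches `onehot i`. -/
lemma reach_onehot_aux (hc : 3 ≤ c) (x : LOrel c) {i j k : Fin 3}
    (hcov : ∀ l : Fin 3, l = i ∨ l = j ∨ l = k)
    (hij : j ≠ i) (hik : k ≠ i) (hjk : j ≠ k)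
    (hi : ∀ l : Fin 3, x.1 l ≤ x.1 i) :
    (reconfGraph (LOrel c)).Reachable x ⟨onehot hc i, onehot_mem hc i⟩ := by
  have hxj : x.1 j < x.1 i := strict_max x.2 hi hij
  have hxk : x.1 k < x.1 i := strict_max x.2 hi hik
  have hx0 : z0 hc < x.1 i := lt_of_le_of_lt (z0_le hc _) hxj
  -- step 1 : set coordinate j to 0
  set y1 := Function.update x.1 j (z0 hc) with hy1
  have hy1i : y1 i = x.1 i := Function.update_of_ne (Ne.symm hij) _ _
  have hy1k : y1 k = x.1 k := Function.update_of_ne (Ne.symm hjk) _ _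
  have hy1j : y1 j = z0 hc := Function.update_self _ _ _
  have hm1 : y1 ∈ LOrel c :=
    mem_of_lt hcov (by rw [hy1j, hy1i]; exact hx0) (by rw [hy1k, hy1i]; exact hxk)
  have r1 : (reconfGraph (LOrel c)).Reachable x ⟨y1, hm1⟩ := reach_update x j (z0 hc) hm1
  -- step 2 : set coordinate k to 0
  set y2 := Function.update y1 k (z0 hc) with hy2
  have hy2i : y2 i = x.1 i := by rw [hy2, Function.update_of_ne (Ne.symm hik), hy1i]
  have hy2j : y2 j = z0 hc := by rw [hy2, Function.update_of_ne hjk, hy1j]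
  have hy2k : y2 k = z0 hc := Function.update_self _ _ _
  have hm2 : y2 ∈ LOrel c :=
    mem_of_lt hcov (by rw [hy2j, hy2i]; exact hx0) (by rw [hy2k, hy2i]; exact hx0)
  have r2 : (reconfGraph (LOrel c)).Reachable ⟨y1, hm1⟩ ⟨y2, hm2⟩ :=
    reach_update ⟨y1, hm1⟩ k (z0 hc) hm2
  -- step 3 : set coordinate i to 1
  set y3 := Function.update y2 i (z1 hc) with hy3
  have hy3eq : y3 = onehot hc i := by
    funext l
    rcases hcov l with h | h | h <;> subst h
    · rw [hy3, Function.update_self, onehot, Function.update_self]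
    · rw [hy3, Function.update_of_ne hij, hy2j, onehot, Function.update_of_ne hij]
    · rw [hy3, Function.update_of_ne hik, hy2k, onehot, Function.update_of_ne hik]
  have hm3 : y3 ∈ LOrel c := hy3eq ▸ onehot_mem hc i
  have r3 : (reconfGraph (LOrel c)).Reachable ⟨y2, hm2⟩ ⟨y3, hm3⟩ :=
    reach_update ⟨y2, hm2⟩ i (z1 hc) hm3
  have : (⟨y3, hm3⟩ : LOrel c) = ⟨onehot hc i, onehot_mem hc i⟩ := Subtype.ext hy3eq
  exact ((r1.trans r2).trans (this ▸ r3))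

lemma reach_onehot (hc : 3 ≤ c) (x : LOrel c) :
    ∃ i : Fin 3, (reconfGraph (LOrel c)).Reachable x ⟨onehot hc i, onehot_mem hc i⟩ := by
  obtain ⟨i, hi, -⟩ := x.2
  refine ⟨i, ?_⟩
  fin_cases i
  · exact reach_onehot_aux hc x (i := 0) (j := 1) (k := 2) (by decide)
      (by decide) (by decide) (by decide) hi
  · exact reach_onehot_aux hc x (i := 1) (j := 0) (k := 2) (by decide)
      (by decide) (by decide) (by decide) hi
  · exact reach_onehot_aux hc x (i := 2) (j := 0) (k := 1) (by decide)
      (by decide) (by decide) (by decide) hi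

/-- `onehot i` reaches `onehot 0`. -/
lemma onehot_reach_zero (hc : 3 ≤ c) (i : Fin 3) :
    (reconfGraph (LOrel c)).Reachable ⟨onehot hc i, onehot_mem hc i⟩
      ⟨onehot hc 0, onehot_mem hc 0⟩ := by
  by_cases h0 : i = 0
  · subst h0; exact SimpleGraph.Reachable.refl _
  -- step 1 : set coordinate 0 to 2
  set w1 := Function.update (onehot hc i) 0 (z2 hc) with hw1
  have hw10 : w1 0 = z2 hc := Function.update_self _ _ _
  have hw1l : ∀ l : Fin 3, l ≠ 0 → w1 l ≤ z1 hc := by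
    intro l hl
    rw [hw1, Function.update_of_ne hl, onehot]
    by_cases hli : l = i
    · subst hli; rw [Function.update_self]
    · rw [Function.update_of_ne hli]; exact le_of_lt (z0_lt_z1 hc)
  have hm1 : w1 ∈ LOrel c := by
    refine mem_of_lt (i := 0) (j := 1) (k := 2) (by decide) ?_ ?_ <;>
      rw [hw10] <;> exact lt_of_le_of_lt (hw1l _ (by decide)) (z1_lt_z2 hc)
  have r1 : (reconfGraph (LOrel c)).Reachable ⟨onehot hc i, onehot_mem hc i⟩ ⟨w1, hm1⟩ :=
    reach_update _ 0 (z2 hc) hm1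
  -- step 2 : set coordinate i to 0
  set w2 := Function.update w1 i (z0 hc) with hw2
  have hw20 : w2 0 = z2 hc := by rw [hw2, Function.update_of_ne (Ne.symm h0), hw10]
  have hw2l : ∀ l : Fin 3, l ≠ 0 → w2 l = z0 hc := by
    intro l hl
    by_cases hli : l = i
    · subst hli; exact Function.update_self _ _ _
    · rw [hw2, Function.update_of_ne hli, hw1, Function.update_of_ne hl, onehot,
        Function.update_of_ne hli]
  have hm2 : w2 ∈ LOrel c := by
    refine mem_of_lt (i := 0) (j := 1) (k := 2) (by decide) ?_ ?_ <;>
      rw [hw20, hw2l _ (by decide)] <;> exact z0_lt_z2 hc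
  have r2 : (reconfGraph (LOrel c)).Reachable ⟨w1, hm1⟩ ⟨w2, hm2⟩ :=
    reach_update _ i (z0 hc) hm2
  -- step 3 : set coordinate 0 to 1
  set w3 := Function.update w2 0 (z1 hc) with hw3
  have hw3eq : w3 = onehot hc 0 := by
    funext l
    by_cases hl : l = 0
    · subst hl; rw [hw3, Function.update_self, onehot, Function.update_self]
    · rw [hw3, Function.update_of_ne hl, hw2l _ hl, onehot, Function.update_of_ne hl]
  have hm3 : w3 ∈ LOrel c := hw3eq ▸ onehot_mem hc 0
  have r3 : (reconfGraph (LOrel c)).Reachable ⟨w2, hm2⟩ ⟨w3, hm3⟩ :=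
    reach_update _ 0 (z1 hc) hm3
  have heq : (⟨w3, hm3⟩ : LOrel c) = ⟨onehot hc 0, onehot_mem hc 0⟩ := Subtype.ext hw3eq
  exact (r1.trans r2).trans (heq ▸ r3)

lemma reach_base (hc : 3 ≤ c) (x : LOrel c) :
    (reconfGraph (LOrel c)).Reachable x ⟨onehot hc 0, onehot_mem hc 0⟩ := by
  obtain ⟨i, hi⟩ := reach_onehot hc x
  exact hi.trans (onehot_reach_zero hc i)

end LOaux

/-- For `c ≥ 3`, the ternary linearly-ordered colouring relation `LO_c` — all triples in
which the maximum entry is attained by exactly one coordinate — is reconfigurable. -/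
theorem lo_reconfigurable (c : ℕ) (hc : 3 ≤ c) :
    (reconfGraph {x : Fin 3 → Fin c | ∃! i : Fin 3, ∀ j : Fin 3, x j ≤ x i}).Connected := by
  have : (reconfGraph (LOaux.LOrel c)).Connected := by
    haveI : Nonempty (LOaux.LOrel c) := ⟨⟨_, LOaux.onehot_mem hc 0⟩⟩
    refine ⟨fun x y => ?_⟩
    exact (LOaux.reach_base hc x).trans (LOaux.reach_base hc y).symm
  exact this
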